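/- Let Y be a dense subset of a topological group X. If Y (with the subspace topology) is κ-Fréchet–Urysohn, then X is κ-Fréchet–Urysohn. -/

import Mathlib

open Filter Topology

/-- A topological space is κ-Fréchet–Urysohn if for every open set `U` and every point
`x` in the closure of `U` there is a sequence in `U` converging to `x`. -/
def KappaFrechetUrysohn (X : Type*) [TopologicalSpace X] : Prop :=
  ∀ U : Set X, IsOpen U → ∀ x ∈ closure U,
    ∃ u : ℕ → X, (∀ n, u n ∈ U) ∧ Tendsto u atTop (𝓝 x)

theorem stmt1 {X : Type*} [TopologicalSpace X] [Group X] [IsTopologicalGroup X]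
    (Y : Set X) (hY : Dense Y) (h : KappaFrechetUrysohn ↥Y) :
    KappaFrechetUrysohn X := by
  intro U hU x hx
  obtain ⟨y₀, hy₀⟩ : Y.Nonempty := hY.nonempty
  -- translate U so that y₀ lies in the closure of the translate
  set e : X ≃ₜ X := Homeomorph.mulLeft (y₀ * x⁻¹) with he
  set V : Set X := e '' U with hV
  have hVopen : IsOpen V := e.isOpenMap U hU
  have hy₀V : y₀ ∈ closure V := by
    have h1 : e x ∈ closure V := by
      rw [hV, ← e.image_closure]; exact Set.mem_image_of_mem _ hx
    have h2 : e x = y₀ := by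
      show y₀ * x⁻¹ * x = y₀; group
    rwa [h2] at h1
  -- y₀ is in the closure (within Y) of V ∩ Y
  have hsub : closure V ⊆ closure (V ∩ Y) := by
    exact closure_minimal (hY.open_subset_closure_inter hVopen) isClosed_closure
  have hy₀' : (⟨y₀, hy₀⟩ : Y) ∈ closure (Subtype.val ⁻¹' V : Set Y) := by
    rw [closure_subtype]
    have : Subtype.val '' (Subtype.val ⁻¹' V : Set Y) = V ∩ Y := by
      rw [Set.image_preimage_eq_inter_range, Subtype.range_coe]
    rw [this]
    exact hsub hy₀V
  obtain ⟨u, huV, hut⟩ := h (Subtype.val ⁻¹' V) (hVopen.preimage continuous_subtype_val)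
    ⟨y₀, hy₀⟩ hy₀'
  refine ⟨fun n => x * y₀⁻¹ * (u n : X), fun n => ?_, ?_⟩
  · obtain ⟨z, hz, hez⟩ := huV n
    have hez' : ((u n : X)) = y₀ * x⁻¹ * z := hez.symm
    show x * y₀⁻¹ * (u n : X) ∈ U
    rw [hez']
    have : x * y₀⁻¹ * (y₀ * x⁻¹ * z) = z := by group
    rw [this]; exact hz
  · have h1 : Tendsto (fun n => (u n : X)) atTop (𝓝 y₀) :=
      (continuous_subtype_val.tendsto _).comp hut
    have h2 : Tendsto (fun n => x * y₀⁻¹ * (u n : X)) atTop (𝓝 (x * y₀⁻¹ * y₀)) :=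
      (continuous_const.mul continuous_id).continuousAt.tendsto.comp h1
    simpa using h2
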